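/- Let θ_i^{(l)} = (Θ_{ij})_{j: c(j)=l} be the vector of edge probabilities from node i to nodes in community l. Suppose λ_{jk} > 0 for all j,k and that for each l the vectors {λ^{(l,k)}}_{k∈[K]} are pairwise non-parallel. Then for any two nodes i,j and any community l: cos(θ_i^{(l)}, θ_j^{(l)}) = 1 if c(i) = c(j), and cos(θ_i^{(l)}, θ_j^{(l)}) < 1 if c(i) ≠ c(j). -/

import Mathlib

open Matrix RealInnerProductSpace

/-- Cosine similarity of the edge-probability vectors `θ_i^{(l)}` and `θ_j^{(l)}`
(vectors indexed by the nodes of community `l`). -/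
noncomputable def cosTheta (n K : ℕ) (Θ : Matrix (Fin n) (Fin n) ℝ) (c : Fin n → Fin K)
    (i j : Fin n) (l : Fin K) : ℝ :=
  (∑ v : {v : Fin n // c v = l}, Θ i v.1 * Θ j v.1) /
    (Real.sqrt (∑ v : {v : Fin n // c v = l}, Θ i v.1 ^ 2) *
      Real.sqrt (∑ v : {v : Fin n // c v = l}, Θ j v.1 ^ 2))

/-- Under positivity of all popularities and pairwise non-parallelism of the vectors
`λ^{(l,k)}`, `cos(θ_i^{(l)}, θ_j^{(l)}) = 1` iff `i, j` are in the same community,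
and `< 1` otherwise. -/
theorem pabm_theta_cosine (n K : ℕ) (hK : 0 < K)
    (Λ : Matrix (Fin n) (Fin K) ℝ) (c : Fin n → Fin K)
    (hpos : ∀ i k, 0 < Λ i k)
    (hne : ∀ k : Fin K, ∃ i, c i = k)
    (hnonpar : ∀ l k k' : Fin K, k ≠ k' → ∀ t : ℝ,
      (fun v : {v : Fin n // c v = l} => Λ v.1 k') ≠
        t • (fun v : {v : Fin n // c v = l} => Λ v.1 k))
    (Θ : Matrix (Fin n) (Fin n) ℝ)
    (hΘ : ∀ i j, Θ i j = Λ i (c j) * Λ j (c i)) :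
    ∀ i j : Fin n, ∀ l : Fin K,
      (c i = c j → cosTheta n K Θ c i j l = 1) ∧
      (c i ≠ c j → cosTheta n K Θ c i j l < 1) := by
  intro i j l
  obtain ⟨v0, hv0⟩ := hne l
  haveI : Nonempty {v : Fin n // c v = l} := ⟨⟨v0, hv0⟩⟩
  -- the vectors as elements of Euclidean space
  set x : EuclideanSpace ℝ {v : Fin n // c v = l} := WithLp.toLp 2 (fun v => Θ i v.1) with hx
  set y : EuclideanSpace ℝ {v : Fin n // c v = l} := WithLp.toLp 2 (fun v => Θ j v.1) with hy
  have hxpos : ∀ v : {v : Fin n // c v = l}, 0 < x v := by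
    intro v; rw [hx]; simp only [PiLp.toLp_apply]; rw [hΘ]; exact mul_pos (hpos _ _) (hpos _ _)
  have hypos : ∀ v : {v : Fin n // c v = l}, 0 < y v := by
    intro v; rw [hy]; simp only [PiLp.toLp_apply]; rw [hΘ]; exact mul_pos (hpos _ _) (hpos _ _)
  have hnx : Real.sqrt (∑ v : {v : Fin n // c v = l}, Θ i v.1 ^ 2) = ‖x‖ := by
    rw [EuclideanSpace.norm_eq]
    congr 1; apply Finset.sum_congr rfl; intro v _
    rw [Real.norm_eq_abs, sq_abs]
  have hny : Real.sqrt (∑ v : {v : Fin n // c v = l}, Θ j v.1 ^ 2) = ‖y‖ := by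
    rw [EuclideanSpace.norm_eq]
    congr 1; apply Finset.sum_congr rfl; intro v _
    rw [Real.norm_eq_abs, sq_abs]
  have hinner : (∑ v : {v : Fin n // c v = l}, Θ i v.1 * Θ j v.1) = (inner ℝ x y : ℝ) := by
    rw [PiLp.inner_apply]
    apply Finset.sum_congr rfl; intro v _
    simp [RCLike.inner_apply, mul_comm, hx, hy]
  have hxne : x ≠ 0 := by
    intro h
    have := hxpos ⟨v0, hv0⟩
    rw [h] at this
    exact lt_irrefl _ this
  have hyne : y ≠ 0 := by
    intro h
    have := hypos ⟨v0, hv0⟩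
    rw [h] at this
    exact lt_irrefl _ this
  have hnxpos : 0 < ‖x‖ := norm_pos_iff.mpr hxne
  have hnypos : 0 < ‖y‖ := norm_pos_iff.mpr hyne
  constructor
  · -- same community
    intro hcij
    have hS : 0 < ∑ v : {v : Fin n // c v = l}, Λ v.1 (c i) ^ 2 := by
      apply Finset.sum_pos
      · intro v _; exact pow_pos (hpos _ _) 2
      · exact Finset.univ_nonempty
    have hnum : (∑ v : {v : Fin n // c v = l}, Θ i v.1 * Θ j v.1)
        = Λ i l * Λ j l * ∑ v : {v : Fin n // c v = l}, Λ v.1 (c i) ^ 2 := by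
      rw [Finset.mul_sum]
      apply Finset.sum_congr rfl; intro v _
      rw [hΘ, hΘ, v.2, ← hcij]; ring
    have hdx : (∑ v : {v : Fin n // c v = l}, Θ i v.1 ^ 2)
        = Λ i l ^ 2 * ∑ v : {v : Fin n // c v = l}, Λ v.1 (c i) ^ 2 := by
      rw [Finset.mul_sum]
      apply Finset.sum_congr rfl; intro v _
      rw [hΘ, v.2]; ring
    have hdy : (∑ v : {v : Fin n // c v = l}, Θ j v.1 ^ 2)
        = Λ j l ^ 2 * ∑ v : {v : Fin n // c v = l}, Λ v.1 (c i) ^ 2 := by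
      rw [Finset.mul_sum]
      apply Finset.sum_congr rfl; intro v _
      rw [hΘ, v.2, ← hcij]; ring
    rw [cosTheta, hnum, hdx, hdy,
      Real.sqrt_mul (sq_nonneg _), Real.sqrt_mul (sq_nonneg _),
      Real.sqrt_sq (le_of_lt (hpos i l)), Real.sqrt_sq (le_of_lt (hpos j l))]
    rw [div_eq_one_iff_eq]
    · rw [mul_mul_mul_comm, Real.mul_self_sqrt hS.le]
    · have hs : 0 < Real.sqrt (∑ v : {v : Fin n // c v = l}, Λ v.1 (c i) ^ 2) :=
        Real.sqrt_pos.mpr hS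
      exact (mul_pos (mul_pos (hpos i l) hs) (mul_pos (hpos j l) hs)).ne'
  · -- different communities
    intro hcij
    rw [cosTheta, hinner, hnx, hny]
    rw [div_lt_one (by positivity)]
    rcases lt_or_eq_of_le (real_inner_le_norm x y) with h | h
    · exact h
    · exfalso
      have heq : ‖y‖ • x = ‖x‖ • y := (inner_eq_norm_mul_iff_real).mp h
      apply hnonpar l (c i) (c j) hcij (‖y‖ * Λ i l / (‖x‖ * Λ j l))
      funext v
      have h1 : ‖y‖ * (Λ i l * Λ v.1 (c i)) = ‖x‖ * (Λ j l * Λ v.1 (c j)) := by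
        have := congrArg (fun w : EuclideanSpace ℝ {v : Fin n // c v = l} => w v) heq
        simpa [hx, hy, hΘ, v.2] using this
      have hΛj := hpos j l
      have hΛi := hpos i l
      simp only [Pi.smul_apply, smul_eq_mul]
      field_simp
      linarith [h1]
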